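/- Fix d > 0, λ > 0, δ > 0 and u ∈ ℝ. Define the Berhu penalty P(β) = 2λ·(|β|·1{|β| < δ} + ((β² + δ²)/(2δ))·1{|β| ≥ δ}). Then the function h(β) = dβ² − 2uβ + P(β) attains its global minimum over β ∈ ℝ at β* given by: β* = sign(u)·(|u| − λ)₊/d when |u| < λ + dδ, and β* = uδ/(λ + dδ) when |u| ≥ λ + dδ. -/

import Mathlib

set_option maxHeartbeats 1000000


/-- closed-form Berhu update.
Fix `d > 0`, `λ > 0`, `δ > 0` and `u ∈ ℝ`.  With the Berhu penalty
`P(β) = 2λ·(|β|·1{|β| < δ} + ((β² + δ²)/(2δ))·1{|β| ≥ δ})`, the function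
`h(β) = dβ² − 2uβ + P(β)` attains its global minimum over `β ∈ ℝ` at `β*`
given by the two-branch Berhu update formula. -/
theorem stmt18 (d lam δ u : ℝ) (hd : 0 < d) (hlam : 0 < lam) (hδ : 0 < δ)
    (P : ℝ → ℝ)
    (hP : ∀ β : ℝ, P β =
      2 * lam * (if |β| < δ then |β| else (β ^ 2 + δ ^ 2) / (2 * δ)))
    (βstar : ℝ)
    (hβstar : βstar =
      if |u| < lam + d * δ then Real.sign u * (max (|u| - lam) 0 / d)
      else u * δ / (lam + d * δ)) :
    ∀ β : ℝ, d * βstar ^ 2 - 2 * u * βstar + P βstar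
      ≤ d * β ^ 2 - 2 * u * β + P β := by
  intro β
  -- P β ≥ 2 λ |β| always
  have hPge : 2 * lam * |β| ≤ P β := by
    rw [hP]
    split_ifs with h
    · exact le_rfl
    · push_neg at h
      have h1 : (β ^ 2 + δ ^ 2) - 2 * δ * |β| = (|β| - δ) ^ 2 := by
        rw [sub_sq]; rw [sq_abs]; ring
      have h2 : 2 * δ * |β| ≤ β ^ 2 + δ ^ 2 := by nlinarith [sq_nonneg (|β| - δ), sq_abs β]
      have h3 : |β| ≤ (β ^ 2 + δ ^ 2) / (2 * δ) := by
        rw [le_div_iff₀ (by positivity)]; nlinarith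
      nlinarith
  by_cases hcase : |u| < lam + d * δ
  · -- soft-threshold branch
    set m : ℝ := max (|u| - lam) 0 / d with hm
    have hm0 : 0 ≤ m := div_nonneg (le_max_right _ _) hd.le
    have hdm : d * m = max (|u| - lam) 0 := by
      rw [hm]; field_simp [hm]
    have hmδ : m < δ := by
      rw [hm, div_lt_iff₀ hd]
      rcases le_or_gt (|u|) lam with h1 | h1
      · rw [max_eq_right (by linarith)]; positivity
      · rw [max_eq_left (by linarith)]; linarith
    -- key soft-threshold inequality
    have key : -(d * m ^ 2) ≤ d * β ^ 2 - 2 * u * β + 2 * lam * |β| := by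
      have h1 : |u| - lam ≤ d * m := hdm ▸ le_max_left _ _
      have h2 : u * β ≤ |u| * |β| := by
        calc u * β ≤ |u * β| := le_abs_self _
        _ = |u| * |β| := abs_mul u β
      nlinarith [sq_nonneg (|β| - m), sq_abs β, abs_nonneg β,
        mul_nonneg (abs_nonneg β) (sub_nonneg.mpr h1)]
    -- value at βstar
    have hstarval : d * βstar ^ 2 - 2 * u * βstar + P βstar ≤ -(d * m ^ 2) := by
      rcases lt_trichotomy u 0 with hu | hu | hu
      · have hs : Real.sign u = -1 := Real.sign_of_neg hu
        have hb : βstar = -m := by rw [hβstar, if_pos hcase, hs]; ring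
        have habs : |βstar| = m := by rw [hb, abs_neg, abs_of_nonneg hm0]
        have hPs : P βstar = 2 * lam * m := by
          rw [hP, habs, if_pos hmδ]
        rw [hPs, hb]
        have huu : -u = |u| := (abs_of_neg hu).symm
        rcases le_or_gt (|u|) lam with h1 | h1
        · have : m = 0 := by rw [hm, max_eq_right (by linarith)]; simp
          rw [this]; nlinarith
        · have hdm' : d * m = |u| - lam := by rw [hdm, max_eq_left (by linarith)]
          nlinarith
      · have hb : βstar = 0 := by
          rw [hβstar, if_pos hcase, hu, Real.sign_zero]; ring
        have hmz : m = 0 := by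
          have h0 : |u| - lam ≤ 0 := by rw [hu, abs_zero]; linarith
          rw [hm, max_eq_right h0]; simp
        have hPs : P βstar = 0 := by
          rw [hP, hb]; simp [abs_of_nonneg, hδ]
        rw [hPs, hb, hmz, hu]; norm_num
      · have hs : Real.sign u = 1 := Real.sign_of_pos hu
        have hb : βstar = m := by rw [hβstar, if_pos hcase, hs]; ring
        have habs : |βstar| = m := by rw [hb, abs_of_nonneg hm0]
        have hPs : P βstar = 2 * lam * m := by
          rw [hP, habs, if_pos hmδ]
        rw [hPs, hb]
        have huu : u = |u| := (abs_of_pos hu).symm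
        rcases le_or_gt (|u|) lam with h1 | h1
        · have : m = 0 := by rw [hm, max_eq_right (by linarith)]; simp
          rw [this]; nlinarith
        · have hdm' : d * m = |u| - lam := by rw [hdm, max_eq_left (by linarith)]
          nlinarith
    linarith
  · -- quadratic branch
    push_neg at hcase
    set c : ℝ := lam + d * δ with hc
    have hc0 : 0 < c := by rw [hc]; positivity
    clear_value c
    have hb : βstar = u * δ / c := by rw [hβstar, if_neg (not_lt.mpr hcase)]
    have habs : δ ≤ |βstar| := by
      rw [hb, abs_div, abs_mul, abs_of_pos hδ, abs_of_pos hc0, le_div_iff₀ hc0]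
      nlinarith
    have hPs : P βstar = 2 * lam * ((βstar ^ 2 + δ ^ 2) / (2 * δ)) := by
      rw [hP, if_neg (not_lt.mpr habs)]
    have hL : d * βstar ^ 2 - 2 * u * βstar + P βstar = lam * δ - u ^ 2 * δ / c := by
      rw [hPs, hb, hc]; field_simp; ring
    rw [hL]
    by_cases hβ : |β| < δ
    · have hPβ : P β = 2 * lam * |β| := by rw [hP, if_pos hβ]
      rw [hPβ]
      have h2 : u * β ≤ |u| * |β| := by
        calc u * β ≤ |u * β| := le_abs_self _
        _ = |u| * |β| := abs_mul u β
      -- step: dβ² - 2uβ + 2λ|β| ≥ dδ² - 2(|u|-λ)δ ≥ λδ - u²δ/c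
      have hprod : 0 ≤ (δ - |β|) * (2 * (|u| - lam) - d * (|β| + δ)) := by
        apply mul_nonneg (by linarith)
        nlinarith [abs_nonneg β]
      have s3 : lam * δ - u ^ 2 * δ / c ≤ d * δ ^ 2 - 2 * (|u| - lam) * δ := by
        have heq : (d * δ ^ 2 - 2 * (|u| - lam) * δ) - (lam * δ - u ^ 2 * δ / c)
            = (c - |u|) ^ 2 * δ / c := by
          rw [hc]; field_simp; ring_nf; rw [sq_abs u]; ring
        have hpos : 0 ≤ (c - |u|) ^ 2 * δ / c :=
          div_nonneg (mul_nonneg (sq_nonneg _) hδ.le) hc0.le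
        linarith
      have hsq : d * |β| ^ 2 = d * β ^ 2 := by rw [sq_abs]
      have hexp : (δ - |β|) * (2 * (|u| - lam) - d * (|β| + δ))
          = (d * |β| ^ 2 - 2 * (|u| - lam) * |β|) - (d * δ ^ 2 - 2 * (|u| - lam) * δ) := by
        ring
      rw [hexp] at hprod
      linarith
    · push_neg at hβ
      have hPβ : P β = 2 * lam * ((β ^ 2 + δ ^ 2) / (2 * δ)) := by
        rw [hP, if_neg (not_lt.mpr hβ)]
      rw [hPβ]
      have heq : (d * β ^ 2 - 2 * u * β + 2 * lam * ((β ^ 2 + δ ^ 2) / (2 * δ)))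
          - (lam * δ - u ^ 2 * δ / c) = (c * β - u * δ) ^ 2 / (δ * c) := by
        rw [hc]; field_simp; ring
      nlinarith [div_nonneg (sq_nonneg (c * β - u * δ)) (mul_pos hδ hc0).le]
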